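/- arXiv:0706.4113 — 2 statements merged into one kernel-verified Lean document; each statement's English description precedes it below -/
import Mathlib

section
/- Let h be a holomorphic function germ at 0 ∈ ℂ vanishing at 0 and not identically zero, and let G_1,…,G_N be holomorphic function germs at 0 ∈ ℂ vanishing at 0, not all identically zero. Then the vanishing order at 0 of the real-analytic function u(ζ) = Re(h(ζ)) + Σ_{j=1}^N |G_j(ζ)|² equals min( ord₀ h , 2·min_{1≤j≤N} ord₀ G_j ); that is, no cancellation can occur between the purely holomorphic/antiholomorphic terms coming from Re(h) and the mixed terms coming from Σ_j |G_j|². -/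
set_option synthInstance.maxHeartbeats 1000000
set_option maxHeartbeats 1000000

open Filter Topology

noncomputable section

/-- `ℂⁿ` with the Euclidean norm. -/
abbrev Cn (n : ℕ) : Type := EuclideanSpace ℂ (Fin n)

/-- The vanishing order at `0 ∈ ℂ` of a function `f : ℂ → F` (`⊤` if `f` vanishes to
infinite order): for an analytic (respectively real-analytic) germ this is the lowest
degree of a nonzero term of its Taylor expansion at `0` in `ζ` (respectively in
`ζ` and `ζ̄`), i.e. the smallest `m` with `iteratedFDeriv ℝ m f 0 ≠ 0`. -/
def vord {F : Type*} [NormedAddCommGroup F] [NormedSpace ℝ F] (f : ℂ → F) : ℕ∞ :=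
  sInf ((fun m : ℕ => (m : ℕ∞)) '' {m : ℕ | iteratedFDeriv ℝ m f 0 ≠ 0})

lemma iteratedFDeriv_congr_nhds {F : Type*} [NormedAddCommGroup F] [NormedSpace ℝ F]
    {f g : ℂ → F} (h : f =ᶠ[𝓝 (0:ℂ)] g) (m : ℕ) :
    iteratedFDeriv ℝ m f 0 = iteratedFDeriv ℝ m g 0 := by
  rw [← iteratedFDerivWithin_univ, ← iteratedFDerivWithin_univ]
  exact Filter.EventuallyEq.iteratedFDerivWithin_eq
    (by simpa [nhdsWithin_univ] using h) h.self_of_nhds m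

lemma derivs_zero_of_ev_zero {F : Type*} [NormedAddCommGroup F] [NormedSpace ℝ F]
    {f : ℂ → F} (h : ∀ᶠ z in 𝓝 (0:ℂ), f z = 0) (m : ℕ) :
    iteratedFDeriv ℝ m f 0 = 0 := by
  rw [iteratedFDeriv_congr_nhds (g := fun _ => (0:F)) h m]
  rcases m with _ | m
  · ext v; simp
  · rw [iteratedFDeriv_const_of_ne (Nat.succ_ne_zero m)]; rfl

lemma vord_eq_top {F : Type*} [NormedAddCommGroup F] [NormedSpace ℝ F]
    {f : ℂ → F} (h : ∀ᶠ z in 𝓝 (0:ℂ), f z = 0) : vord f = ⊤ := by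
  have : {m : ℕ | iteratedFDeriv ℝ m f 0 ≠ 0} = ∅ := by
    ext m; simp [derivs_zero_of_ev_zero h m]
  simp [vord, this]

lemma vord_eq_nat {F : Type*} [NormedAddCommGroup F] [NormedSpace ℝ F]
    {f : ℂ → F} {d : ℕ} (h1 : ∀ m, m < d → iteratedFDeriv ℝ m f 0 = 0)
    (h2 : iteratedFDeriv ℝ d f 0 ≠ 0) : vord f = d := by
  apply le_antisymm
  · exact sInf_le ⟨d, h2, rfl⟩
  · refine le_sInf ?_
    rintro b ⟨m, hm, rfl⟩
    exact_mod_cast Nat.cast_le.mpr (not_lt.mp fun hlt => hm (h1 m hlt))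


lemma vord_eq_of_ray {F : Type*} [NormedAddCommGroup F] [NormedSpace ℝ F] [CompleteSpace F]
    {f : ℂ → F} {d : ℕ} (hf : AnalyticAt ℝ f 0)
    (hlow : ∀ m, m < d → iteratedFDeriv ℝ m f 0 = 0)
    {ω : ℂ} {c : ℝ} (hc : 0 < c)
    (hray : ∀ᶠ t : ℝ in 𝓝[>] 0, c * t ^ d ≤ ‖f ((t:ℂ) * ω)‖) :
    vord f = d := by
  refine vord_eq_nat hlow fun hd => ?_
  have hall : ∀ m, m ≤ d → iteratedFDeriv ℝ m f 0 = 0 := fun m hm =>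
    hm.lt_or_eq.elim (hlow m) (fun e => e ▸ hd)
  obtain ⟨pp, hpp⟩ := hf
  obtain ⟨rr, hball⟩ := hpp
  have hdiag : ∀ m, m ≤ d → ∀ y : ℂ, pp m (fun _ => y) = 0 := by
    intro m hm y
    have h1 := hball.factorial_smul y m
    rw [hall m hm] at h1
    have h1' : m.factorial • pp m (fun _ => y) = 0 := by simpa using h1
    have h2 : (m.factorial : ℝ) • pp m (fun _ => y) = 0 := by
      rw [Nat.cast_smul_eq_nsmul]; exact h1'
    have h3 : (m.factorial : ℝ) ≠ 0 := Nat.cast_ne_zero.mpr m.factorial_ne_zero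
    simpa [h3] using (smul_eq_zero.mp h2)
  have hps : ∀ y : ℂ, pp.partialSum (d+1) y = 0 := by
    intro y
    apply Finset.sum_eq_zero
    intro k hk
    rw [hdiag k (Nat.lt_succ_iff.mp (Finset.mem_range.mp hk)) y]
  have hO : (fun y : ℂ => f y) =O[𝓝 0] fun y => ‖y‖^(d+1) := by
    have := (HasFPowerSeriesOnBall.hasFPowerSeriesAt hball).isBigO_sub_partialSum_pow (d+1)
    simpa [hps] using this
  rw [Asymptotics.isBigO_iff] at hO
  obtain ⟨C, hC⟩ := hO
  have tendray : Tendsto (fun t : ℝ => (t:ℂ) * ω) (𝓝[>] 0) (𝓝 0) := by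
    apply Tendsto.mono_left ?_ nhdsWithin_le_nhds
    have hcont : Continuous (fun t : ℝ => (t:ℂ) * ω) := by continuity
    simpa using hcont.tendsto' 0 0 (by simp)
  have hev := tendray.eventually hC
  have htlt : ∀ᶠ t : ℝ in 𝓝[>] 0, C * ‖ω‖^(d+1) * t < c := by
    have h4 : Tendsto (fun t : ℝ => C * ‖ω‖^(d+1) * t) (𝓝[>] 0) (𝓝 0) := by
      apply Tendsto.mono_left ?_ nhdsWithin_le_nhds
      have hcont : Continuous (fun t : ℝ => C * ‖ω‖^(d+1) * t) := by continuity
      simpa using hcont.tendsto' 0 0 (by simp)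
    exact h4.eventually (Filter.Tendsto.eventually_lt_const hc tendsto_id)
  have hpos : ∀ᶠ t : ℝ in 𝓝[>] 0, 0 < t := eventually_mem_nhdsWithin
  obtain ⟨t, h1, h2, h3, h4⟩ := (hray.and (hev.and (htlt.and hpos))).exists

  have hnrm : ‖(t:ℂ) * ω‖ = t * ‖ω‖ := by
    rw [norm_mul, Complex.norm_real, Real.norm_eq_abs, abs_of_pos h4]
  have hpowpos : (0:ℝ) < t ^ d := pow_pos h4 d
  have hchain : c * t ^ d ≤ C * ‖ω‖^(d+1) * t * t ^ d := by
    calc c * t ^ d ≤ ‖f ((t:ℂ) * ω)‖ := h1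
    _ ≤ C * ‖‖(t:ℂ) * ω‖ ^ (d+1)‖ := h2
    _ = C * ‖ω‖^(d+1) * t * t ^ d := by
        rw [hnrm, Real.norm_eq_abs, abs_of_nonneg (by positivity)]
        ring
  nlinarith [mul_lt_mul_of_pos_right h3 hpowpos]


lemma id_derivs_zero {i : ℕ} (hi : i ≠ 1) : iteratedFDeriv ℝ i (fun z : ℂ => z) 0 = 0 := by
  rcases i with _ | i
  · ext v; simp
  · rcases i with _ | i
    · exact absurd rfl hi
    · ext v
      rw [iteratedFDeriv_succ_apply_right]
      have hfd : (fderiv ℝ fun z : ℂ => z) = fun _ => ContinuousLinearMap.id ℝ ℂ := by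
        funext z; exact fderiv_id'
      rw [hfd, iteratedFDeriv_const_of_ne (Nat.succ_ne_zero i)]
      simp

lemma pow_derivs_zero : ∀ P : ℕ, ∀ m : ℕ, m < P →
    iteratedFDeriv ℝ m (fun z : ℂ => z ^ P) 0 = 0 := by
  intro P
  induction P with
  | zero => intro m hm; omega
  | succ P IH =>
    intro m hm
    have heq : (fun z : ℂ => z ^ (P+1)) =
        fun z => (ContinuousLinearMap.mul ℝ ℂ) z (z ^ P) := by
      funext z; simp [pow_succ']
    rw [heq]
    have hb := (ContinuousLinearMap.mul ℝ ℂ).norm_iteratedFDeriv_le_of_bilinear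
      (f := fun z : ℂ => z) (g := fun z : ℂ => z ^ P)
      contDiff_id (contDiff_id.pow P) (0:ℂ) (le_refl (m : WithTop ℕ∞))
    have hz : ∑ i ∈ Finset.range (m + 1), (m.choose i : ℝ) *
        ‖iteratedFDeriv ℝ i (fun z : ℂ => z) 0‖ *
        ‖iteratedFDeriv ℝ (m - i) (fun z : ℂ => z ^ P) 0‖ = 0 := by
      apply Finset.sum_eq_zero
      intro i hi
      have hi' := Finset.mem_range.mp hi
      rcases eq_or_ne i 1 with rfl | hne
      · have : m - 1 < P := by omega
        rw [IH _ this]; simp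
      · rw [id_derivs_zero hne]; simp
    rw [hz, mul_zero] at hb
    exact norm_le_zero_iff.mp hb

lemma mul_derivs_zero {r : ℝ} (hr : 0 < r) {f g : ℂ → ℂ}
    (hf : AnalyticOnNhd ℝ f (Metric.ball (0:ℂ) r))
    (hg : AnalyticOnNhd ℝ g (Metric.ball (0:ℂ) r))
    {a b m : ℕ} (hfa : ∀ i, i < a → iteratedFDeriv ℝ i f 0 = 0)
    (hgb : ∀ i, i < b → iteratedFDeriv ℝ i g 0 = 0) (hm : m < a + b) :
    iteratedFDeriv ℝ m (fun z => f z * g z) 0 = 0 := by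
  have hso : IsOpen (Metric.ball (0:ℂ) r) := Metric.isOpen_ball
  have hx : (0:ℂ) ∈ Metric.ball (0:ℂ) r := Metric.mem_ball_self hr
  have hud : UniqueDiffOn ℝ (Metric.ball (0:ℂ) r) := hso.uniqueDiffOn
  have heq : (fun z : ℂ => f z * g z) =
      fun z => (ContinuousLinearMap.mul ℝ ℂ) (f z) (g z) := rfl
  rw [heq, ← iteratedFDerivWithin_of_isOpen m hso hx]
  have hb := (ContinuousLinearMap.mul ℝ ℂ).norm_iteratedFDerivWithin_le_of_bilinear
    (hf.contDiffOn hud) (hg.contDiffOn hud) hud hx (le_refl (m : WithTop ℕ∞))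
  have hz : ∑ i ∈ Finset.range (m + 1), (m.choose i : ℝ) *
      ‖iteratedFDerivWithin ℝ i f (Metric.ball (0:ℂ) r) 0‖ *
      ‖iteratedFDerivWithin ℝ (m - i) g (Metric.ball (0:ℂ) r) 0‖ = 0 := by
    apply Finset.sum_eq_zero
    intro i hi
    have hi' := Finset.mem_range.mp hi
    rcases lt_or_ge i a with hia | hia
    · rw [iteratedFDerivWithin_of_isOpen i hso hx, hfa i hia]; simp
    · have : m - i < b := by omega
      rw [iteratedFDerivWithin_of_isOpen (m - i) hso hx, hgb _ this]; simp
  rw [hz, mul_zero] at hb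
  exact norm_le_zero_iff.mp hb


lemma ray_lower {f g : ℂ → ℂ} {P : ℕ} (hfac : ∀ᶠ z in 𝓝 (0:ℂ), f z = z ^ P * g z)
    (hgc : ContinuousAt g 0) (hg0 : g 0 ≠ 0) :
    ∀ᶠ t : ℝ in 𝓝[>] 0, (‖g 0‖/2) * t ^ P ≤ ‖f ((t:ℂ) * 1)‖ := by
  have hpos : 0 < ‖g 0‖ := norm_pos_iff.mpr hg0
  have hgn : ∀ᶠ z in 𝓝 (0:ℂ), ‖g 0‖/2 < ‖g z‖ :=
    (hgc.norm).eventually (eventually_gt_nhds (half_lt_self hpos))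
  have tendray : Tendsto (fun t : ℝ => (t:ℂ) * 1) (𝓝[>] 0) (𝓝 0) := by
    apply Tendsto.mono_left ?_ nhdsWithin_le_nhds
    have hcont : Continuous (fun t : ℝ => (t:ℂ) * 1) := by continuity
    simpa using hcont.tendsto' 0 0 (by simp)
  filter_upwards [tendray.eventually (hfac.and hgn), eventually_mem_nhdsWithin] with t ht htpos
  obtain ⟨h1, h2⟩ := ht
  simp only [mul_one] at h1 h2 ⊢
  have htpos' : (0:ℝ) < t := htpos
  rw [h1, norm_mul, norm_pow, Complex.norm_real, Real.norm_eq_abs, abs_of_pos htpos']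
  have h3 : (0:ℝ) ≤ t ^ P := le_of_lt (pow_pos htpos' P)
  nlinarith [h2.le]



/-- no cancellation in `Re h + Σ |G_j|²`. Let `h` be a holomorphic germ
at `0 ∈ ℂ` vanishing at `0`, not identically zero, and `G_1, …, G_N` holomorphic germs at
`0` vanishing at `0`, not all identically zero.  Then the vanishing order at `0` of
`u(ζ) = Re h(ζ) + Σ_j |G_j(ζ)|²` equals `min(ord₀ h, 2·min_j ord₀ G_j)`. -/
theorem vanishing_order_re_add_sum_sq_norm
    (N : ℕ) (h : ℂ → ℂ) (hh : AnalyticAt ℂ h 0) (hh0 : h 0 = 0)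
    (hhne : ¬ ∀ᶠ ζ in 𝓝 (0 : ℂ), h ζ = 0)
    (G : Fin N → ℂ → ℂ) (hG : ∀ j, AnalyticAt ℂ (G j) 0) (hG0 : ∀ j, G j 0 = 0)
    (hGne : ∃ j, ¬ ∀ᶠ ζ in 𝓝 (0 : ℂ), G j ζ = 0)
    (u : ℂ → ℝ) (hu : ∀ ζ, u ζ = (h ζ).re + ∑ j, ‖G j ζ‖ ^ 2) :
    vord u = min (vord h) (2 * ⨅ j, vord (G j)) := by
  classical
  -- factor h
  have hordh : analyticOrderAt h 0 ≠ ⊤ := fun htop => hhne (analyticOrderAt_eq_top.mp htop)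
  obtain ⟨p, hp⟩ := WithTop.ne_top_iff_exists.mp hordh
  obtain ⟨g, hga, hg0, hfacs⟩ := (hh.analyticOrderAt_eq_natCast (n := p)).mp hp.symm
  have hfac : ∀ᶠ z in 𝓝 (0:ℂ), h z = z ^ p * g z := by
    filter_upwards [hfacs] with z hz; simpa [smul_eq_mul] using hz
  have hp1 : 0 < p := by
    rcases Nat.eq_zero_or_pos p with rfl | hp1
    · exfalso; apply hg0
      have := hfac.self_of_nhds; simpa [hh0] using this.symm
    · exact hp1
  -- factor each G j
  have key : ∀ j, ∃ (qj : ℕ) (gj : ℂ → ℂ), AnalyticAt ℂ gj 0 ∧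
      (∀ᶠ z in 𝓝 (0:ℂ), G j z = z ^ qj * gj z) ∧
      ((∀ᶠ z in 𝓝 (0:ℂ), G j z = 0) ∨ (gj 0 ≠ 0 ∧ 0 < qj)) := by
    intro j
    by_cases hev : ∀ᶠ z in 𝓝 (0:ℂ), G j z = 0
    · exact ⟨0, fun _ => 0, analyticAt_const,
        by filter_upwards [hev] with z hz; simp [hz], Or.inl hev⟩
    · have hne : analyticOrderAt (G j) 0 ≠ ⊤ := fun htop => hev (analyticOrderAt_eq_top.mp htop)
      obtain ⟨qj, hqj⟩ := WithTop.ne_top_iff_exists.mp hne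
      obtain ⟨gj, hgja, hgj0, hf⟩ := ((hG j).analyticOrderAt_eq_natCast (n := qj)).mp hqj.symm
      refine ⟨qj, gj, hgja, by filter_upwards [hf] with z hz; simpa [smul_eq_mul] using hz,
        Or.inr ⟨hgj0, ?_⟩⟩
      rcases Nat.eq_zero_or_pos qj with rfl | hq1
      · exfalso; apply hgj0
        have := hf.self_of_nhds; simpa [hG0 j] using this.symm
      · exact hq1
  choose Q g' hg'a hfac' halt using key
  -- choose a ball where everything is analytic
  have hEV : ∀ᶠ z in 𝓝 (0:ℂ), AnalyticAt ℂ h z ∧ AnalyticAt ℂ g z ∧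
      (∀ j, AnalyticAt ℂ (G j) z) ∧ (∀ j, AnalyticAt ℂ (g' j) z) :=
    (hh.eventually_analyticAt).and ((hga.eventually_analyticAt).and
      ((eventually_all.mpr fun j => (hG j).eventually_analyticAt).and
        (eventually_all.mpr fun j => (hg'a j).eventually_analyticAt)))
  obtain ⟨r, hr, hball⟩ := Metric.eventually_nhds_iff_ball.mp hEV
  set s : Set ℂ := Metric.ball (0:ℂ) r with hs_def
  have hso : IsOpen s := Metric.isOpen_ball
  have hx : (0:ℂ) ∈ s := Metric.mem_ball_self hr
  have hud : UniqueDiffOn ℝ s := hso.uniqueDiffOn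
  have hHa : AnalyticOnNhd ℝ h s := fun z hz => ((hball z hz).1).restrictScalars
  have hGa : ∀ j, AnalyticOnNhd ℝ (G j) s := fun j z hz => ((hball z hz).2.2.1 j).restrictScalars
  have hgaS : AnalyticOnNhd ℝ g s := fun z hz => ((hball z hz).2.1).restrictScalars
  have hg'aS : ∀ j, AnalyticOnNhd ℝ (g' j) s := fun j z hz =>
    ((hball z hz).2.2.2 j).restrictScalars
  have hpowa : ∀ P : ℕ, AnalyticOnNhd ℝ (fun z : ℂ => z ^ P) s := fun P z _ =>
    (analyticAt_id (𝕜 := ℝ) (E := ℂ)).pow P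
  have hconjGa : ∀ j, AnalyticOnNhd ℝ (fun z => (starRingEnd ℂ) (G j z)) s := fun j z hz =>
    ((Complex.conjCLE.toContinuousLinearMap.analyticAt _).comp (hGa j z hz))
  -- vanishing of low-order derivatives
  have Dh : ∀ m, m < p → iteratedFDeriv ℝ m h 0 = 0 := by
    intro m hm
    rw [iteratedFDeriv_congr_nhds hfac m]
    exact mul_derivs_zero hr (hpowa p) hgaS (pow_derivs_zero p)
      (fun i hi => absurd hi (Nat.not_lt_zero i)) (by omega)
  have DG : ∀ j, ∀ i, i < Q j → iteratedFDeriv ℝ i (G j) 0 = 0 := by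
    intro j i hi
    rw [iteratedFDeriv_congr_nhds (hfac' j) i]
    exact mul_derivs_zero hr (hpowa (Q j)) (hg'aS j) (pow_derivs_zero (Q j))
      (fun i hi => absurd hi (Nat.not_lt_zero i)) (by omega)
  -- vord of h and G j
  have hvh : vord h = (p : ℕ∞) := by
    refine vord_eq_of_ray hh.restrictScalars Dh
      (half_pos (norm_pos_iff.mpr hg0)) (ray_lower hfac hga.continuousAt hg0)
  have hvG : ∀ j, (¬ ∀ᶠ z in 𝓝 (0:ℂ), G j z = 0) → vord (G j) = (Q j : ℕ∞) := by
    intro j hev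
    have hne0 : g' j 0 ≠ 0 := ((halt j).resolve_left hev).1
    exact vord_eq_of_ray (hG j).restrictScalars (DG j)
      (half_pos (norm_pos_iff.mpr hne0)) (ray_lower (hfac' j) (hg'a j).continuousAt hne0)
  have hvGtop : ∀ j, (∀ᶠ z in 𝓝 (0:ℂ), G j z = 0) → vord (G j) = ⊤ := fun j hev =>
    vord_eq_top hev
  -- the minimal q
  obtain ⟨j₀, hj₀⟩ := hGne
  haveI : Nonempty (Fin N) := ⟨j₀⟩
  obtain ⟨j₁, -, hj₁min⟩ := Finset.exists_min_image Finset.univ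
    (fun j => vord (G j)) ⟨j₀, Finset.mem_univ _⟩
  have hj₁ : ¬ ∀ᶠ z in 𝓝 (0:ℂ), G j₁ z = 0 := by
    intro hev
    have h1 := hj₁min j₀ (Finset.mem_univ _)
    rw [hvGtop j₁ hev, hvG j₀ hj₀, top_le_iff] at h1
    exact (ENat.coe_ne_top (Q j₀)) h1
  set q : ℕ := Q j₁ with hq_def
  have hvq : vord (G j₁) = (q : ℕ∞) := hvG j₁ hj₁
  have hInf : ⨅ j, vord (G j) = (q : ℕ∞) := by
    apply le_antisymm
    · exact iInf_le_of_le j₁ hvq.le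
    · exact le_iInf fun j => hvq ▸ hj₁min j (Finset.mem_univ _)
  have hqle : ∀ j, (¬ ∀ᶠ z in 𝓝 (0:ℂ), G j z = 0) → q ≤ Q j := by
    intro j hev
    have := hj₁min j (Finset.mem_univ _)
    rw [hvq, hvG j hev] at this
    exact_mod_cast this
  set d : ℕ := min p (2 * q) with hd_def
  have hGlowq : ∀ j, ∀ i, i < q → iteratedFDeriv ℝ i (G j) 0 = 0 := by
    intro j i hi
    by_cases hev : ∀ᶠ z in 𝓝 (0:ℂ), G j z = 0
    · exact derivs_zero_of_ev_zero hev i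
    · exact DG j i (lt_of_lt_of_le hi (hqle j hev))
  have hconjGlowq : ∀ j, ∀ i, i < q →
      iteratedFDeriv ℝ i (fun z => (starRingEnd ℂ) (G j z)) 0 = 0 := by
    intro j i hi
    have hn : ‖iteratedFDeriv ℝ i (fun z => (starRingEnd ℂ) (G j z)) 0‖ = 0 := by
      rw [← iteratedFDerivWithin_of_isOpen i hso hx]
      rw [show (fun z => (starRingEnd ℂ) (G j z)) = (⇑Complex.conjLIE ∘ G j) from rfl]
      rw [Complex.conjLIE.norm_iteratedFDerivWithin_comp_left (G j) hud hx i]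
      rw [iteratedFDerivWithin_of_isOpen i hso hx, hGlowq j i hi]
      simp
    exact norm_eq_zero.mp hn
  -- the function w with u = re ∘ w
  set sumf : ℂ → ℂ := fun z => ∑ j, G j z * (starRingEnd ℂ) (G j z) with hsumf_def
  set w : ℂ → ℂ := fun z => h z + sumf z with hw_def
  have hueq : u = fun z => Complex.reCLM (w z) := by
    funext ζ
    rw [hu]
    simp only [hw_def, hsumf_def, Complex.reCLM_apply, Complex.add_re, Complex.re_sum]
    congr 1
    apply Finset.sum_congr rfl
    intro j _
    rw [Complex.mul_conj]
    simp [Complex.normSq_eq_norm_sq, ← Complex.ofReal_pow]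
  have hsumfa : AnalyticOnNhd ℝ sumf s := by
    intro z hz
    apply Finset.analyticAt_fun_sum
    intro j _
    exact (hGa j z hz).mul (hconjGa j z hz)
  have hwa : AnalyticOnNhd ℝ w s := fun z hz => (hHa z hz).add (hsumfa z hz)
  have hua : AnalyticAt ℝ u 0 := by
    rw [hueq]
    exact (Complex.reCLM.analyticAt _).comp (hwa 0 hx)
  -- low derivatives of u vanish
  have hulow : ∀ m, m < d → iteratedFDeriv ℝ m u 0 = 0 := by
    intro m hm
    have hmp : m < p := lt_of_lt_of_le hm (min_le_left _ _)
    have hm2q : m < 2 * q := lt_of_lt_of_le hm (min_le_right _ _)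
    rw [hueq]
    rw [show (fun z => Complex.reCLM (w z)) = (⇑Complex.reCLM ∘ w) from rfl]
    rw [← iteratedFDerivWithin_of_isOpen m hso hx]
    rw [Complex.reCLM.iteratedFDerivWithin_comp_left (hwa.contDiffOn hud 0 hx) hud hx
      (le_refl (m : WithTop ℕ∞))]
    have hW : iteratedFDerivWithin ℝ m w s 0 = 0 := by
      rw [hw_def]
      rw [iteratedFDerivWithin_add_apply' (hHa.contDiffOn hud 0 hx) (hsumfa.contDiffOn hud 0 hx) hud hx]
      have h1 : iteratedFDerivWithin ℝ m h s 0 = 0 := by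
        rw [iteratedFDerivWithin_of_isOpen m hso hx]; exact Dh m hmp
      have h2 : iteratedFDerivWithin ℝ m sumf s 0 = 0 := by
        rw [hsumf_def]
        rw [iteratedFDerivWithin_fun_sum_apply hud hx
          (fun j _ => ((hGa j).mul (hconjGa j)).contDiffOn hud 0 hx)]
        apply Finset.sum_eq_zero
        intro j _
        rw [iteratedFDerivWithin_of_isOpen m hso hx]
        exact mul_derivs_zero hr (hGa j) (hconjGa j) (hGlowq j) (hconjGlowq j) (by omega)
      rw [h1, h2, add_zero]
    rw [hW]
    ext v
    simp
  -- sum of squares is nonneg, so u ≥ Re h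
  have husq : ∀ ζ, (h ζ).re ≤ u ζ := by
    intro ζ
    rw [hu]
    have : (0:ℝ) ≤ ∑ j, ‖G j ζ‖ ^ 2 :=
      Finset.sum_nonneg fun j _ => pow_nonneg (norm_nonneg _) 2
    linarith
  -- the ray lower bound for u
  have hray : ∃ (ω : ℂ) (c : ℝ), 0 < c ∧
      ∀ᶠ t : ℝ in 𝓝[>] 0, c * t ^ d ≤ ‖u ((t:ℂ) * ω)‖ := by
    rcases le_or_gt p (2*q) with hple | hplt
    · -- case d = p : use a good direction ω
      have hd_eq : d = p := min_eq_left hple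
      obtain ⟨ω, hω⟩ := IsAlgClosed.exists_pow_nat_eq
        ((starRingEnd ℂ) (g 0) * ((‖g 0‖ : ℝ) : ℂ)⁻¹) hp1
      have hg0pos : 0 < ‖g 0‖ := norm_pos_iff.mpr hg0
      have hval : ω ^ p * g 0 = ((‖g 0‖ : ℝ) : ℂ) := by
        rw [hω]
        have hcm : (starRingEnd ℂ) (g 0) * g 0 = ((‖g 0‖^2 : ℝ) : ℂ) := by
          rw [mul_comm, Complex.mul_conj, Complex.normSq_eq_norm_sq]
        calc (starRingEnd ℂ) (g 0) * ((‖g 0‖ : ℝ) : ℂ)⁻¹ * g 0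
            = ((starRingEnd ℂ) (g 0) * g 0) * ((‖g 0‖ : ℝ) : ℂ)⁻¹ := by ring
          _ = ((‖g 0‖^2 : ℝ) : ℂ) * ((‖g 0‖ : ℝ) : ℂ)⁻¹ := by rw [hcm]
          _ = ((‖g 0‖ : ℝ) : ℂ) := by
              rw [← Complex.ofReal_inv, ← Complex.ofReal_mul]
              congr 1
              rw [sq, mul_assoc, mul_inv_cancel₀ (ne_of_gt hg0pos), mul_one]
      refine ⟨ω, ‖g 0‖/2, half_pos hg0pos, ?_⟩
      have hcont : ContinuousAt (fun z => (ω ^ p * g z).re) 0 :=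
        Complex.continuous_re.continuousAt.comp (continuousAt_const.mul hga.continuousAt)
      have hgn : ∀ᶠ z in 𝓝 (0:ℂ), ‖g 0‖/2 < (ω ^ p * g z).re := by
        refine hcont.eventually (eventually_gt_nhds ?_)
        show ‖g 0‖/2 < (ω ^ p * g 0).re
        rw [hval, Complex.ofReal_re]
        exact half_lt_self hg0pos
      have tendray : Tendsto (fun t : ℝ => (t:ℂ) * ω) (𝓝[>] 0) (𝓝 0) := by
        apply Tendsto.mono_left ?_ nhdsWithin_le_nhds
        have hcont2 : Continuous (fun t : ℝ => (t:ℂ) * ω) := by continuity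
        simpa using hcont2.tendsto' 0 0 (by simp)
      filter_upwards [tendray.eventually (hfac.and hgn), eventually_mem_nhdsWithin]
        with t ht htpos
      obtain ⟨h1, h2⟩ := ht
      have htpos' : (0:ℝ) < t := htpos
      have hre : (h ((t:ℂ)*ω)).re = t^p * (ω ^ p * g ((t:ℂ)*ω)).re := by
        rw [h1]
        rw [show ((t:ℂ)*ω) ^ p * g ((t:ℂ)*ω)
            = ((t^p : ℝ) : ℂ) * (ω ^ p * g ((t:ℂ)*ω)) by push_cast; ring]
        exact Complex.re_ofReal_mul _ _
      have hu1 : ‖g 0‖/2 * t ^ d ≤ u ((t:ℂ)*ω) := by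
        calc ‖g 0‖/2 * t ^ d = t^p * (‖g 0‖/2) := by rw [hd_eq]; ring
          _ ≤ t^p * (ω ^ p * g ((t:ℂ)*ω)).re :=
              mul_le_mul_of_nonneg_left h2.le (le_of_lt (pow_pos htpos' p))
          _ = (h ((t:ℂ)*ω)).re := hre.symm
          _ ≤ u ((t:ℂ)*ω) := husq _
      calc ‖g 0‖/2 * t ^ d ≤ u ((t:ℂ)*ω) := hu1
        _ ≤ |u ((t:ℂ)*ω)| := le_abs_self _
        _ = ‖u ((t:ℂ)*ω)‖ := (Real.norm_eq_abs _).symm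
    · -- case d = 2q : direction 1
      have hd_eq : d = 2*q := min_eq_right hplt.le
      have hne0 : g' j₁ 0 ≠ 0 := ((halt j₁).resolve_left hj₁).1
      have hb0pos : 0 < ‖g' j₁ 0‖ := norm_pos_iff.mpr hne0
      set b0 : ℝ := ‖g' j₁ 0‖ with hb0_def
      refine ⟨1, b0^2/8, by positivity, ?_⟩
      have hgb : ∀ᶠ z in 𝓝 (0:ℂ), ‖g z‖ < ‖g 0‖ + 1 :=
        hga.continuousAt.norm.eventually (eventually_lt_nhds (lt_add_one _))
      have hgb1 : ∀ᶠ z in 𝓝 (0:ℂ), b0/2 < ‖g' j₁ z‖ :=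
        (hg'a j₁).continuousAt.norm.eventually (eventually_gt_nhds (half_lt_self hb0pos))
      have tendray : Tendsto (fun t : ℝ => ((t:ℂ) : ℂ)) (𝓝[>] 0) (𝓝 0) := by
        apply Tendsto.mono_left ?_ nhdsWithin_le_nhds
        have hcont2 : Continuous (fun t : ℝ => ((t:ℂ))) := by continuity
        simpa using hcont2.tendsto' 0 0 (by simp)
      set ε : ℝ := min 1 ((b0^2/8) / (‖g 0‖+1)) with hε_def
      have hεpos : 0 < ε := by
        apply lt_min one_pos
        positivity
      have hsmall : ∀ᶠ t : ℝ in 𝓝[>] 0, t < ε :=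
        eventually_nhdsWithin_of_eventually_nhds (eventually_lt_nhds hεpos)
      filter_upwards [tendray.eventually ((hfac.and (hfac' j₁)).and (hgb.and hgb1)),
        eventually_mem_nhdsWithin, hsmall] with t ht htpos htε
      obtain ⟨⟨h1, h2⟩, h3, h4⟩ := ht
      have htpos' : (0:ℝ) < t := htpos
      have ht1 : t ≤ 1 := le_of_lt (lt_of_lt_of_le htε (min_le_left _ _))
      have htb : t * (‖g 0‖+1) ≤ b0^2/8 := by
        have h5 : t ≤ (b0^2/8) / (‖g 0‖+1) := le_of_lt (lt_of_lt_of_le htε (min_le_right _ _))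
        have h6 : (0:ℝ) < ‖g 0‖+1 := by positivity
        rw [le_div_iff₀ h6] at h5
        exact h5
      -- bound ‖G j₁ t‖^2 from below
      have hG2 : t^(2*q) * (b0^2/4) ≤ ‖G j₁ ((t:ℂ))‖^2 := by
        rw [h2, norm_mul, norm_pow, Complex.norm_real, Real.norm_eq_abs, abs_of_pos htpos']
        have hq1 : (0:ℝ) ≤ t^q := le_of_lt (pow_pos htpos' q)
        have := h4.le
        calc t^(2*q) * (b0^2/4) = (t^q * (b0/2))^2 := by rw [pow_mul]; ring
          _ ≤ (t^q * ‖g' j₁ ((t:ℂ))‖)^2 := by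
              apply pow_le_pow_left₀ (by positivity)
              exact mul_le_mul_of_nonneg_left this hq1
      -- bound Re h from below
      have hh2 : -(t^(2*q) * (b0^2/8)) ≤ (h ((t:ℂ))).re := by
        have hnh : ‖h ((t:ℂ))‖ ≤ t^(2*q) * (b0^2/8) := by
          rw [h1, norm_mul, norm_pow, Complex.norm_real, Real.norm_eq_abs, abs_of_pos htpos']
          calc t^p * ‖g ((t:ℂ))‖ ≤ t^(2*q+1) * (‖g 0‖+1) := by
                apply mul_le_mul (pow_le_pow_of_le_one htpos'.le ht1 hplt) h3.le
                  (norm_nonneg _) (le_of_lt (pow_pos htpos' _))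
            _ = t^(2*q) * (t * (‖g 0‖+1)) := by ring
            _ ≤ t^(2*q) * (b0^2/8) :=
                mul_le_mul_of_nonneg_left htb (le_of_lt (pow_pos htpos' _))
        have := Complex.abs_re_le_norm (h ((t:ℂ)))
        have h7 : -(t^(2*q) * (b0^2/8)) ≤ -|(h ((t:ℂ))).re| := by
          simp only [neg_le_neg_iff]
          exact this.trans hnh
        exact h7.trans (neg_abs_le _)
      have hsum : (h ((t:ℂ))).re + ‖G j₁ ((t:ℂ))‖^2 ≤ u ((t:ℂ)) := by
        rw [hu]
        have : ‖G j₁ ((t:ℂ))‖^2 ≤ ∑ j, ‖G j ((t:ℂ))‖^2 :=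
          Finset.single_le_sum (f := fun j => ‖G j ((t:ℂ))‖^2)
            (fun j _ => pow_nonneg (norm_nonneg _) 2) (Finset.mem_univ j₁)
        linarith
      have hu1 : b0^2/8 * t ^ d ≤ u ((t:ℂ)) := by
        rw [hd_eq]
        nlinarith [hG2, hh2, hsum]
      simp only [mul_one]
      calc b0^2/8 * t ^ d ≤ u ((t:ℂ)) := hu1
        _ ≤ |u ((t:ℂ))| := le_abs_self _
        _ = ‖u ((t:ℂ))‖ := (Real.norm_eq_abs _).symm
  obtain ⟨ω, c, hc, hrayu⟩ := hray
  have hvu : vord u = (d : ℕ∞) := vord_eq_of_ray hua hulow hc hrayu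
  rw [hvu, hvh, hInf]
  rw [show (2 : ℕ∞) * (q : ℕ∞) = ((2 * q : ℕ) : ℕ∞) by push_cast; ring]
  rcases le_total p (2 * q) with hc' | hc'
  · have h1 : d = p := min_eq_left hc'
    rw [h1, min_eq_left (show (p:ℕ∞) ≤ ((2*q:ℕ):ℕ∞) from Nat.cast_le.mpr hc')]
  · have h1 : d = 2*q := min_eq_right hc'
    rw [h1, min_eq_right (show ((2*q:ℕ):ℕ∞) ≤ (p:ℕ∞) from Nat.cast_le.mpr hc')]
end
end

section
/- Let D be a connected open subset of ℂ and let ρ be a smooth real-valued function on D such that C = {ρ = 0} is a smooth connected curve in D with dρ nowhere zero at points of C, and such that D ∖ C consists of two nonempty connected components W_1 and W_2 with ρ < 0 on W_1. Let η > 1 and let φ be a smooth negative subharmonic function on W_1. Then it is impossible that −φ = (−ρ)^η on W_1. -/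
set_option synthInstance.maxHeartbeats 1000000
set_option maxHeartbeats 1000000

open Filter Topology

noncomputable section

/-- (IV.11.1). Let `D ⊆ ℂ` be a connected open set, `ρ` a smooth
real-valued function on `D` whose zero set `C = {ρ = 0}` is a smooth connected curve
(`dρ ≠ 0` along `C`) such that `D ∖ C` consists of two nonempty connected open components
`W₁`, `W₂`, with `ρ < 0` on `W₁`.  Let `η > 1` and let `φ` be a smooth negative subharmonic
function on `W₁` (the Laplacian of `φ` is nonnegative on `W₁`).  Then it is impossible that
`-φ = (-ρ)^η` on `W₁`. -/
theorem no_subharmonic_with_fractional_vanishing_order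
    (D : Set ℂ) (hD : IsOpen D) (hDconn : IsConnected D)
    (ρ : ℂ → ℝ) (hρ : ContDiffOn ℝ (⊤ : ℕ∞) ρ D)
    (C : Set ℂ) (hC : C = {z ∈ D | ρ z = 0}) (hCconn : IsConnected C)
    (hdρ : ∀ z ∈ C, fderiv ℝ ρ z ≠ 0)
    (W₁ W₂ : Set ℂ) (hW₁o : IsOpen W₁) (hW₂o : IsOpen W₂)
    (hW₁c : IsConnected W₁) (hW₂c : IsConnected W₂)
    (hdisj : Disjoint W₁ W₂) (hunion : W₁ ∪ W₂ = D \ C)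
    (hρneg : ∀ z ∈ W₁, ρ z < 0)
    (η : ℝ) (hη : 1 < η)
    (φ : ℂ → ℝ) (hφ : ContDiffOn ℝ (⊤ : ℕ∞) φ W₁) (hφneg : ∀ z ∈ W₁, φ z < 0)
    (hsubh : ∀ z ∈ W₁,
      0 ≤ fderiv ℝ (fun w => fderiv ℝ φ w 1) z 1 +
          fderiv ℝ (fun w => fderiv ℝ φ w Complex.I) z Complex.I) :
    ¬ ∀ z ∈ W₁, -φ z = (-ρ z) ^ η := by
  intro h
  have hone : (1 : WithTop ℕ∞) ≤ ((⊤:ℕ∞) : WithTop ℕ∞) := by exact_mod_cast le_top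
  -- basic set facts
  have hW₁D : W₁ ⊆ D := fun x hx => (hunion ▸ (Set.mem_union_left W₂ hx : x ∈ W₁ ∪ W₂)).1
  have hW₂D : W₂ ⊆ D := fun x hx => (hunion ▸ (Set.mem_union_right W₁ hx : x ∈ W₁ ∪ W₂)).1
  have hρW₂ne : ∀ w ∈ W₂, ρ w ≠ 0 := by
    intro w hw hw0
    have hmem : w ∈ D \ C := hunion ▸ (Set.mem_union_right W₁ hw)
    exact hmem.2 (hC ▸ (⟨hmem.1, hw0⟩ : w ∈ {z ∈ D | ρ z = 0}))
  -- smoothness of derivatives of ρ on D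
  have hρ' : ContDiffOn ℝ (⊤ : ℕ∞) (fderiv ℝ ρ) D := by
    have hrhoinf : ContDiffOn ℝ (((⊤:ℕ∞)) : WithTop ℕ∞) ρ D := hρ
    exact ((contDiffOn_infty_iff_fderiv_of_isOpen hD).1 hrhoinf).2
  have hd1 : ∀ v : ℂ, ContDiffOn ℝ (⊤ : ℕ∞) (fun z => fderiv ℝ ρ z v) D := fun v =>
    (ContinuousLinearMap.apply ℝ ℝ v).contDiff.comp_contDiffOn hρ'
  have hd2 : ∀ v : ℂ, ContDiffOn ℝ (⊤ : ℕ∞) (fderiv ℝ (fun z => fderiv ℝ ρ z v)) D := by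
    intro v
    have hinf : ContDiffOn ℝ (((⊤:ℕ∞)) : WithTop ℕ∞) (fun z => fderiv ℝ ρ z v) D := hd1 v
    exact ((contDiffOn_infty_iff_fderiv_of_isOpen hD).1 hinf).2
  have hd2v : ∀ v : ℂ, ContDiffOn ℝ (⊤ : ℕ∞)
      (fun z => fderiv ℝ (fun w => fderiv ℝ ρ w v) z v) D := fun v =>
    (ContinuousLinearMap.apply ℝ ℝ v).contDiff.comp_contDiffOn (hd2 v)
  -- the function g
  set Δ : ℂ → ℝ := fun z => fderiv ℝ (fun w => fderiv ℝ ρ w 1) z 1 +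
      fderiv ℝ (fun w => fderiv ℝ ρ w Complex.I) z Complex.I with hΔdef
  set g : ℂ → ℝ := fun z =>
      (η - 1) * ((fderiv ℝ ρ z 1) ^ 2 + (fderiv ℝ ρ z Complex.I) ^ 2) + ρ z * Δ z with hgdef
  -- differentiability of ρ at points of D
  have hdiffρ : ∀ z ∈ D, HasFDerivAt ρ (fderiv ℝ ρ z) z := fun z hz =>
    ((hρ.contDiffAt (hD.mem_nhds hz)).differentiableAt (by simp)).hasFDerivAt
  -- first derivative of φ on W₁
  have D1 : ∀ x ∈ W₁, fderiv ℝ φ x = (η * (-ρ x) ^ (η - 1)) • fderiv ℝ ρ x := by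
    intro x hx
    have hxD : x ∈ D := hW₁D hx
    have hu : 0 < -ρ x := by linarith [hρneg x hx]
    have hg1 : HasFDerivAt (fun w => -((-ρ w) ^ η))
        (-((η * (-ρ x) ^ (η - 1)) • (-(fderiv ℝ ρ x)))) x :=
      (((hdiffρ x hxD).neg).rpow_const (Or.inl hu.ne')).neg
    have heq : φ =ᶠ[𝓝 x] fun w => -((-ρ w) ^ η) := by
      filter_upwards [hW₁o.mem_nhds hx] with w hw
      have := h w hw; linarith
    rw [heq.fderiv_eq, hg1.fderiv, smul_neg, neg_neg]
  -- second derivatives of φ, hence g ≤ 0 on W₁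
  have D2 : ∀ z ∈ W₁, g z ≤ 0 := by
    intro z hz
    have hzD : z ∈ D := hW₁D hz
    have hu : 0 < -ρ z := by linarith [hρneg z hz]
    have key : ∀ v : ℂ, fderiv ℝ (fun w => fderiv ℝ φ w v) z v
        = η * ((-ρ z) ^ (η - 1) * (fderiv ℝ (fun w => fderiv ℝ ρ w v) z v)
            - (η - 1) * (-ρ z) ^ (η - 2) * (fderiv ℝ ρ z v) ^ 2) := by
      intro v
      have hB : HasFDerivAt (fun w => fderiv ℝ ρ w v)
          (fderiv ℝ (fun w => fderiv ℝ ρ w v) z) z :=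
        (((hd1 v).contDiffAt (hD.mem_nhds hzD)).differentiableAt (by simp)).hasFDerivAt
      have hA : HasFDerivAt (fun w => (-ρ w) ^ (η - 1))
          (((η - 1) * (-ρ z) ^ (η - 1 - 1)) • (-(fderiv ℝ ρ z))) z :=
        ((hdiffρ z hzD).neg).rpow_const (Or.inl hu.ne')
      rw [show η - 1 - 1 = η - 2 by ring] at hA
      have hprod := (hA.mul hB).const_mul η
      have heq2 : (fun w => fderiv ℝ φ w v)
          =ᶠ[𝓝 z] fun w => η * ((-ρ w) ^ (η - 1) * fderiv ℝ ρ w v) := by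
        filter_upwards [hW₁o.mem_nhds hz] with w hw
        rw [D1 w hw]
        simp [mul_assoc]
      rw [heq2.fderiv_eq, (show HasFDerivAt (fun w => η * ((-ρ w) ^ (η - 1) * fderiv ℝ ρ w v)) _ z from hprod).fderiv]
      simp only [ContinuousLinearMap.coe_smul', Pi.smul_apply, ContinuousLinearMap.add_apply,
        ContinuousLinearMap.smul_apply, ContinuousLinearMap.neg_apply, smul_eq_mul]
      ring
    have hsub := hsubh z hz
    rw [key 1, key Complex.I] at hsub
    have hpow1 : (-ρ z) ^ (η - 1) = (-ρ z) ^ (η - 2) * (-ρ z) := by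
      rw [show η - 1 = η - 2 + 1 by ring, Real.rpow_add hu, Real.rpow_one]
    have hp2 : (0:ℝ) < (-ρ z) ^ (η - 2) := Real.rpow_pos_of_pos hu _
    rw [hpow1] at hsub
    have hηpos : (0:ℝ) < η := by linarith
    simp only [hgdef, hΔdef]
    nlinarith [hsub, mul_pos hηpos hp2]
  -- ρ > 0 on W₂
  have hρW₂pos : ∀ w ∈ W₂, 0 < ρ w := by
    by_contra hcon
    push_neg at hcon
    obtain ⟨w, hw, hwle⟩ := hcon
    have hwneg : ρ w < 0 := lt_of_le_of_ne hwle (hρW₂ne w hw)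
    have hallneg : ∀ x ∈ W₂, ρ x < 0 := by
      intro x hx
      rcases lt_or_gt_of_ne (hρW₂ne x hx) with hlt | hgt
      · exact hlt
      · exfalso
        obtain ⟨c, hc, hc0⟩ := hW₂c.isPreconnected.intermediate_value₂ hw hx
          (hρ.continuousOn.mono hW₂D) continuousOn_const hwneg.le hgt.le
        exact hρW₂ne c hc hc0
    obtain ⟨z₀, hz₀C⟩ := hCconn.nonempty
    have hz₀' : z₀ ∈ {z ∈ D | ρ z = 0} := hC ▸ hz₀C
    have hmax : IsLocalMax ρ z₀ := by
      filter_upwards [hD.mem_nhds hz₀'.1] with x hxD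
      rw [hz₀'.2]
      by_cases hxC : x ∈ C
      · exact le_of_eq (hC ▸ hxC : x ∈ {z ∈ D | ρ z = 0}).2
      · have hx12 : x ∈ W₁ ∪ W₂ := hunion.symm ▸ (⟨hxD, hxC⟩ : x ∈ D \ C)
        rcases hx12 with hx | hx
        · exact (hρneg x hx).le
        · exact (hallneg x hx).le
    exact hdρ z₀ hz₀C hmax.fderiv_eq_zero
  -- pick a point on C
  obtain ⟨z₀, hz₀C⟩ := hCconn.nonempty
  have hz₀' : z₀ ∈ {z ∈ D | ρ z = 0} := hC ▸ hz₀C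
  have hz₀D : z₀ ∈ D := hz₀'.1
  have hfne := hdρ z₀ hz₀C
  -- |∇ρ|² > 0 at z₀
  have hq : 0 < (fderiv ℝ ρ z₀ 1) ^ 2 + (fderiv ℝ ρ z₀ Complex.I) ^ 2 := by
    rcases (lt_or_eq_of_le (by positivity :
        (0:ℝ) ≤ (fderiv ℝ ρ z₀ 1) ^ 2 + (fderiv ℝ ρ z₀ Complex.I) ^ 2)) with hlt | heq0
    · exact hlt
    · exfalso
      have hs1 := sq_nonneg (fderiv ℝ ρ z₀ 1)
      have hsI := sq_nonneg (fderiv ℝ ρ z₀ Complex.I)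
      have h1 : fderiv ℝ ρ z₀ 1 = 0 :=
        pow_eq_zero_iff two_ne_zero |>.1 (by linarith)
      have hI : fderiv ℝ ρ z₀ Complex.I = 0 :=
        pow_eq_zero_iff two_ne_zero |>.1 (by linarith)
      apply hfne
      apply ContinuousLinearMap.ext; intro x
      have hx : (x : ℂ) = x.re • (1:ℂ) + x.im • Complex.I := by
        simp [Complex.real_smul, Complex.re_add_im]
      rw [hx, map_add, map_smul, map_smul, h1, hI]; simp
  -- g is continuous on D and positive at z₀
  have hgcont : ContinuousOn g D := by
    exact (continuousOn_const.mul (((hd1 1).continuousOn.pow 2).add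
        ((hd1 Complex.I).continuousOn.pow 2))).add
      (hρ.continuousOn.mul (((hd2v 1).continuousOn).add ((hd2v Complex.I).continuousOn)))
  have hg0 : 0 < g z₀ := by
    have : g z₀ = (η - 1) * ((fderiv ℝ ρ z₀ 1) ^ 2 + (fderiv ℝ ρ z₀ Complex.I) ^ 2) := by
      simp [hgdef, hz₀'.2]
    rw [this]
    exact mul_pos (by linarith) hq
  have hgat : ContinuousAt g z₀ := hgcont.continuousAt (hD.mem_nhds hz₀D)
  have hUg : g ⁻¹' (Set.Ioi 0) ∈ 𝓝 z₀ := hgat.preimage_mem_nhds (Ioi_mem_nhds hg0)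
  -- direction in which ρ decreases
  obtain ⟨v, hv⟩ : ∃ v : ℂ, fderiv ℝ ρ z₀ v < 0 := by
    by_contra hall
    push_neg at hall
    apply hfne
    apply ContinuousLinearMap.ext; intro x
    have h1 := hall x
    have h2 := hall (-x)
    rw [map_neg] at h2
    have : fderiv ℝ ρ z₀ x = 0 := le_antisymm (by linarith) h1
    simpa using this
  -- the curve t ↦ z₀ + t v
  have hγ : HasDerivAt (fun t : ℝ => ρ (z₀ + t • v)) (fderiv ℝ ρ z₀ v) 0 := by
    have hline : HasDerivAt (fun t : ℝ => z₀ + t • v) v 0 := by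
      simpa using ((hasDerivAt_id (0:ℝ)).smul_const v).const_add z₀
    have hP' : HasFDerivAt ρ (fderiv ℝ ρ z₀) ((fun t : ℝ => z₀ + t • v) 0) := by
      simpa using hdiffρ z₀ hz₀D
    exact hP'.comp_hasDerivAt 0 hline
  -- eventually near 0⁺ : ρ(z₀ + t v) < 0
  have hslope := hasDerivAt_iff_tendsto_slope.1 hγ
  have hslope_neg : ∀ᶠ t in 𝓝[≠] (0:ℝ), slope (fun t : ℝ => ρ (z₀ + t • v)) 0 t < 0 :=
    hslope.eventually_mem (Iio_mem_nhds hv)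
  have hmemnhd : ∀ᶠ t in 𝓝 (0:ℝ), (z₀ + t • v) ∈ D ∧ g (z₀ + t • v) > 0 := by
    have hcurve : Continuous fun t : ℝ => z₀ + t • v := by continuity
    have h1 : ∀ᶠ t in 𝓝 (0:ℝ), (z₀ + t • v) ∈ D := by
      have := hcurve.continuousAt (x := (0:ℝ)).preimage_mem_nhds
        (by simpa using hD.mem_nhds hz₀D)
      filter_upwards [this] with t ht using ht
    have h2 : ∀ᶠ t in 𝓝 (0:ℝ), g (z₀ + t • v) > 0 := by
      have := hcurve.continuousAt (x := (0:ℝ)).preimage_mem_nhds (by simpa using hUg)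
      filter_upwards [this] with t ht using ht
    filter_upwards [h1, h2] with t h1 h2 using ⟨h1, h2⟩
  have hfinal : ∀ᶠ t in 𝓝[>] (0:ℝ),
      (z₀ + t • v) ∈ D ∧ g (z₀ + t • v) > 0 ∧ ρ (z₀ + t • v) < 0 := by
    have h3 : ∀ᶠ t in 𝓝[>] (0:ℝ), slope (fun t : ℝ => ρ (z₀ + t • v)) 0 t < 0 :=
      nhdsWithin_mono 0 (fun t (ht : t ∈ Set.Ioi (0:ℝ)) => ne_of_gt ht) hslope_neg
    have h4 : ∀ᶠ t in 𝓝[>] (0:ℝ), (0:ℝ) < t := eventually_mem_nhdsWithin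
    filter_upwards [nhdsWithin_le_nhds hmemnhd, h3, h4] with t hmem hsl ht
    refine ⟨hmem.1, hmem.2, ?_⟩
    have hs : slope (fun t : ℝ => ρ (z₀ + t • v)) 0 t = ρ (z₀ + t • v) / t := by
      simp [slope_def_field, hz₀'.2]
    rw [hs] at hsl
    rcases div_neg_iff.1 hsl with ⟨ha, hb⟩ | ⟨ha, hb⟩
    · linarith
    · exact ha
  obtain ⟨t, htD, htg, htρ⟩ := hfinal.exists
  set z := z₀ + t • v with hzdef
  have hzC : z ∉ C := by
    intro hzC
    exact absurd (hC ▸ hzC : z ∈ {z ∈ D | ρ z = 0}).2 (ne_of_lt htρ)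
  have hz12 : z ∈ W₁ ∪ W₂ := hunion.symm ▸ (⟨htD, hzC⟩ : z ∈ D \ C)
  have hzW₁ : z ∈ W₁ := by
    rcases hz12 with hz | hz
    · exact hz
    · exact absurd (hρW₂pos z hz) (not_lt.2 htρ.le)
  exact absurd htg (not_lt.2 (D2 z hzW₁))
end
end
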